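/- Define F(q, E) = √((E₊ − E − q²)(E − E₋ + q²) / (4E₋)) for E₋ < E < E₊, 0 < E₋, and 0 ≤ q with E + q² in the gap (E₋, E₊). Then the critical value q_c(E), defined as the positive solution of q = F(q, E), satisfies q_c(E) ≤ G/(4√E₋) where G = E₊ − E₋, with equality when E = (E₊ + E₋)/2 − G²/(16 E₋) (provided this value lies in the gap). -/
import Mathlib


/-- The critical exponential decay constant `q_c(E)`, defined as the positive solution of
`q = F(q, E)` with `F(q, E) = √((E₊ - E - q²)(E - E₋ + q²)/(4E₋))`, satisfies
`q_c(E) ≤ G/(4√E₋)` with `G = E₊ - E₋`, with equality when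
`E = (E₊ + E₋)/2 - G²/(16E₋)`. -/
theorem critical_decay_bound (Em Ep E qc : ℝ)
    (hEm : 0 < Em) (hgap : Em < Ep) (hE1 : Em < E) (hE2 : E < Ep)
    (hq : 0 < qc)
    (hin1 : Em < E + qc ^ 2) (hin2 : E + qc ^ 2 < Ep)
    (hqc : qc = Real.sqrt ((Ep - E - qc ^ 2) * (E - Em + qc ^ 2) / (4 * Em))) :
    qc ≤ (Ep - Em) / (4 * Real.sqrt Em) ∧
    (E = (Ep + Em) / 2 - (Ep - Em) ^ 2 / (16 * Em) →
      qc = (Ep - Em) / (4 * Real.sqrt Em)) := by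
  have hA : 0 < Ep - E - qc ^ 2 := by linarith
  have hB : 0 < E - Em + qc ^ 2 := by nlinarith [sq_nonneg qc]
  have harg : 0 ≤ (Ep - E - qc ^ 2) * (E - Em + qc ^ 2) / (4 * Em) := by positivity
  have hsq : qc ^ 2 = (Ep - E - qc ^ 2) * (E - Em + qc ^ 2) / (4 * Em) := by
    have := Real.sq_sqrt harg
    rw [← hqc] at this
    exact this
  have key : 4 * Em * qc ^ 2 = (Ep - E - qc ^ 2) * (E - Em + qc ^ 2) := by
    field_simp at hsq; linarith
  have hsEm : 0 < Real.sqrt Em := Real.sqrt_pos.2 hEm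
  have hEmsq : Real.sqrt Em ^ 2 = Em := Real.sq_sqrt hEm.le
  set c := (Ep - Em) / (4 * Real.sqrt Em) with hc
  have hcpos : 0 < c := by
    apply div_pos (by linarith) (by positivity)
  have hc2 : c ^ 2 = (Ep - Em) ^ 2 / (16 * Em) := by
    rw [hc, div_pow, mul_pow, hEmsq]; norm_num
  have hbound : qc ^ 2 ≤ c ^ 2 := by
    rw [hc2, le_div_iff₀ (by positivity)]
    nlinarith [sq_nonneg ((Ep - E - qc ^ 2) - (E - Em + qc ^ 2))]
  constructor
  · nlinarith [hbound, hq, hcpos]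
  · intro hEeq
    have hu : (qc ^ 2 - c ^ 2) * (qc ^ 2 - c ^ 2 + 4 * Em) = 0 := by
      rw [hc2]
      rw [hEeq] at key
      field_simp at key ⊢
      linear_combination (1/4) * key
    have hqq : qc ^ 2 = c ^ 2 := by
      rcases mul_eq_zero.1 hu with h | h
      · linarith
      · exfalso
        have hx : qc ^ 2 = c ^ 2 - 4 * Em := by linarith
        rw [hc2] at hx
        have h1 : Em < (Ep + Em) / 2 - (Ep - Em) ^ 2 / (16 * Em) := by rw [← hEeq]; exact hE1
        have h2 : E - Em + qc ^ 2 > 0 := hB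
        rw [hEeq, hx] at h2
        have h3 : (Ep - Em) ^ 2 / (16 * Em) < (Ep - Em) / 2 := by linarith
        have hG : Ep - Em > 8 * Em := by linarith
        have h4 : (Ep - Em) ^ 2 < 8 * Em * (Ep - Em) := by
          have := (div_lt_iff₀ (by positivity : (0:ℝ) < 16 * Em)).1 h3
          linarith [this]
        have h5 := mul_lt_mul_of_pos_right hG (show (0:ℝ) < Ep - Em by linarith)
        linarith [h4, h5]
    have hz : (qc - c) * (qc + c) = 0 := by ring_nf; linear_combination hqq
    rcases mul_eq_zero.1 hz with h | h
    · linarith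
    · linarith
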